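/- Vanna of the barrier-pricing parameter 𝒜: fix K > 0, T > 0, r_d, r_f ∈ ℝ and φ ∈ {1, −1}. For S > 0, σ > 0 let 𝒜(S, σ) = φ(S e^{-r_f T} N(φx₁) − K e^{-r_d T} N(φ(x₁ − σ√T))) with x₁ = ln(S/K)/(σ√T) + (1+α)σ√T and α = (r_d − r_f − σ²/2)/σ². Then the mixed second partial derivative ∂²𝒜/∂S∂σ (the σ-derivative of the Delta ∂𝒜/∂S) exists at every (S, σ) with S, σ > 0 and equals ((S/K)^{−r_d/σ² + r_f/σ² − 1/2}/(2√(2π) σ² √T)) · (T(−2r_d + 2r_f + σ²) − 2 ln(S/K)) · exp(−(4 ln²(S/K) + T²(4r_d² + r_d(4σ² − 8r_f) + (2r_f + σ²)²))/(8σ²T)). -/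

import Mathlib

noncomputable def stdNormalCdf (z : ℝ) : ℝ :=
  ∫ x in Set.Iic z, (1 / Real.sqrt (2 * Real.pi)) * Real.exp (-x ^ 2 / 2)

noncomputable def gpdf (x : ℝ) : ℝ := (1 / Real.sqrt (2 * Real.pi)) * Real.exp (-x ^ 2 / 2)

lemma gpdf_cont : Continuous gpdf := by
  unfold gpdf; continuity

lemma gpdf_integrable : MeasureTheory.Integrable gpdf := by
  have h : MeasureTheory.Integrable (fun x : ℝ => Real.exp (-(1/2) * x ^ 2)) :=
    integrable_exp_neg_mul_sq (by norm_num)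
  have := h.const_mul (1 / Real.sqrt (2 * Real.pi))
  refine this.congr ?_
  filter_upwards with x
  unfold gpdf
  ring_nf

lemma hasDerivAt_cdf (z : ℝ) : HasDerivAt stdNormalCdf (gpdf z) z := by
  have hfun : stdNormalCdf = fun u => stdNormalCdf 0 + ∫ x in (0:ℝ)..u, gpdf x := by
    funext u
    rw [show stdNormalCdf u = ∫ x in Set.Iic u, gpdf x from rfl,
      show stdNormalCdf 0 = ∫ x in Set.Iic (0:ℝ), gpdf x from rfl,
      ← intervalIntegral.integral_Iic_sub_Iic (gpdf_integrable.integrableOn)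
      (gpdf_integrable.integrableOn)]
    ring
  rw [hfun]
  exact ((intervalIntegral.integral_hasDerivAt_right
    (gpdf_cont.intervalIntegrable _ _)
    (gpdf_cont.aestronglyMeasurable.stronglyMeasurableAtFilter)
    gpdf_cont.continuousAt).const_add _)

lemma gpdf_even {φ : ℝ} (hφ : φ = 1 ∨ φ = -1) (x : ℝ) : gpdf (φ * x) = gpdf x := by
  rcases hφ with rfl | rfl
  · simp
  · simp only [gpdf]
    ring_nf

lemma exp_key (a b x y : ℝ) (ha : 0 < a) (hb : 0 < b)
    (h : Real.log a + x = Real.log b + y) : a * Real.exp x = b * Real.exp y := by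
  rw [← Real.exp_log ha, ← Real.exp_log hb, ← Real.exp_add, ← Real.exp_add, h]

lemma delta_eq (K T rd rf φ : ℝ) (hK : 0 < K) (hT : 0 < T)
    (hφ : φ = 1 ∨ φ = -1) (S v : ℝ) (hS : 0 < S) (hv : 0 < v) :
    deriv (fun s : ℝ =>
      φ * (s * Real.exp (-rf * T) *
          stdNormalCdf (φ * (Real.log (s / K) / (v * Real.sqrt T) +
            (1 + (rd - rf - v ^ 2 / 2) / v ^ 2) * (v * Real.sqrt T))) -
        K * Real.exp (-rd * T) *
          stdNormalCdf (φ * (Real.log (s / K) / (v * Real.sqrt T) +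
            (1 + (rd - rf - v ^ 2 / 2) / v ^ 2) * (v * Real.sqrt T) - v * Real.sqrt T)))) S
    = φ * Real.exp (-rf * T) *
        stdNormalCdf (φ * (Real.log (S / K) / (v * Real.sqrt T) +
          (1 + (rd - rf - v ^ 2 / 2) / v ^ 2) * (v * Real.sqrt T))) := by
  set sT := Real.sqrt T with hsTdef
  have hsT : 0 < sT := Real.sqrt_pos.mpr hT
  have hsT2 : sT ^ 2 = T := by rw [hsTdef]; exact Real.sq_sqrt hT.le
  set C := (1 + (rd - rf - v ^ 2 / 2) / v ^ 2) * (v * sT) with hC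
  have hlog : HasDerivAt (fun s : ℝ => Real.log (s / K)) ((S / K)⁻¹ * (1 / K)) S := by
    have h1 : HasDerivAt (fun s : ℝ => s / K) (1 / K) S := (hasDerivAt_id S).div_const K
    exact (Real.hasDerivAt_log (ne_of_gt (div_pos hS hK))).comp S h1
  have hd1 : HasDerivAt (fun s : ℝ => Real.log (s / K) / (v * sT) + C)
      ((S / K)⁻¹ * (1 / K) / (v * sT)) S := (hlog.div_const (v * sT)).add_const C
  have hd2 : HasDerivAt (fun s : ℝ => Real.log (s / K) / (v * sT) + C - v * sT)
      ((S / K)⁻¹ * (1 / K) / (v * sT)) S := hd1.sub_const (v * sT)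
  have hN1 : HasDerivAt (fun s : ℝ => stdNormalCdf (φ * (Real.log (s / K) / (v * sT) + C)))
      (gpdf (φ * (Real.log (S / K) / (v * sT) + C)) * (φ * ((S / K)⁻¹ * (1 / K) / (v * sT)))) S :=
    (hasDerivAt_cdf _).comp S (hd1.const_mul φ)
  have hN2 : HasDerivAt
      (fun s : ℝ => stdNormalCdf (φ * (Real.log (s / K) / (v * sT) + C - v * sT)))
      (gpdf (φ * (Real.log (S / K) / (v * sT) + C - v * sT)) *
        (φ * ((S / K)⁻¹ * (1 / K) / (v * sT)))) S :=
    (hasDerivAt_cdf _).comp S (hd2.const_mul φ)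
  have hterm1 : HasDerivAt (fun s : ℝ => s * Real.exp (-rf * T) *
      stdNormalCdf (φ * (Real.log (s / K) / (v * sT) + C)))
      (1 * Real.exp (-rf * T) * stdNormalCdf (φ * (Real.log (S / K) / (v * sT) + C)) +
        S * Real.exp (-rf * T) *
          (gpdf (φ * (Real.log (S / K) / (v * sT) + C)) *
            (φ * ((S / K)⁻¹ * (1 / K) / (v * sT))))) S :=
    ((hasDerivAt_id S).mul_const (Real.exp (-rf * T))).mul hN1
  have hterm2 : HasDerivAt (fun s : ℝ => K * Real.exp (-rd * T) *
      stdNormalCdf (φ * (Real.log (s / K) / (v * sT) + C - v * sT)))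
      (K * Real.exp (-rd * T) *
        (gpdf (φ * (Real.log (S / K) / (v * sT) + C - v * sT)) *
          (φ * ((S / K)⁻¹ * (1 / K) / (v * sT))))) S :=
    hN2.const_mul (K * Real.exp (-rd * T))
  have htot := (hterm1.sub hterm2).const_mul φ
  simp only [Pi.sub_apply] at htot
  rw [htot.deriv]
  rw [gpdf_even hφ, gpdf_even hφ]
  have hkey : S * Real.exp (-rf * T) *
      Real.exp (-(Real.log (S / K) / (v * sT) + C) ^ 2 / 2)
      = K * Real.exp (-rd * T) *
        Real.exp (-(Real.log (S / K) / (v * sT) + C - v * sT) ^ 2 / 2) := by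
    rw [mul_assoc, mul_assoc, ← Real.exp_add, ← Real.exp_add]
    apply exp_key _ _ _ _ hS hK
    rw [Real.log_div hS.ne' hK.ne', hC]
    have hTe : T = sT ^ 2 := hsT2.symm
    rw [hTe]
    field_simp
    ring
  simp only [gpdf]
  rcases hφ with rfl | rfl
  · linear_combination ((1 / Real.sqrt (2 * Real.pi)) * ((S / K)⁻¹ * (1 / K) / (v * sT))) * hkey
  · linear_combination ((1 / Real.sqrt (2 * Real.pi)) * ((S / K)⁻¹ * (1 / K) / (v * sT))) * hkey

theorem vanna_A (K T rd rf φ : ℝ) (hK : 0 < K) (hT : 0 < T)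
    (hφ : φ = 1 ∨ φ = -1) (S σ : ℝ) (hS : 0 < S) (hσ : 0 < σ) :
    HasDerivAt (fun v : ℝ =>
        deriv (fun s : ℝ =>
          φ * (s * Real.exp (-rf * T) *
              stdNormalCdf (φ * (Real.log (s / K) / (v * Real.sqrt T) +
                (1 + (rd - rf - v ^ 2 / 2) / v ^ 2) * (v * Real.sqrt T))) -
            K * Real.exp (-rd * T) *
              stdNormalCdf (φ * (Real.log (s / K) / (v * Real.sqrt T) +
                (1 + (rd - rf - v ^ 2 / 2) / v ^ 2) * (v * Real.sqrt T) - v * Real.sqrt T)))) S)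
      ((S / K) ^ (-rd / σ ^ 2 + rf / σ ^ 2 - 1 / 2) /
          (2 * Real.sqrt (2 * Real.pi) * σ ^ 2 * Real.sqrt T) *
        (T * (-2 * rd + 2 * rf + σ ^ 2) - 2 * Real.log (S / K)) *
        Real.exp (-(4 * Real.log (S / K) ^ 2 +
            T ^ 2 * (4 * rd ^ 2 + rd * (4 * σ ^ 2 - 8 * rf) + (2 * rf + σ ^ 2) ^ 2)) /
          (8 * σ ^ 2 * T))) σ := by
  have hsT : 0 < Real.sqrt T := Real.sqrt_pos.mpr hT
  have hsT2 : Real.sqrt T ^ 2 = T := Real.sq_sqrt hT.le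
  set sT := Real.sqrt T with hsTdef
  -- derivative of the inner argument with respect to v
  have hmul : HasDerivAt (fun v : ℝ => v * sT) sT σ := by
    simpa using (hasDerivAt_id' σ).mul_const sT
  have h1 : HasDerivAt (fun v : ℝ => Real.log (S / K) / (v * sT))
      ((0 * (σ * sT) - Real.log (S / K) * sT) / (σ * sT) ^ 2) σ :=
    (hasDerivAt_const σ _).div hmul (by positivity)
  have hn : HasDerivAt (fun v : ℝ => rd - rf - v ^ 2 / 2)
      (-((2 : ℕ) * σ ^ (2 - 1) / 2)) σ :=
    ((hasDerivAt_pow 2 σ).div_const 2).const_sub (rd - rf)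
  have hq : HasDerivAt (fun v : ℝ => (rd - rf - v ^ 2 / 2) / v ^ 2)
      ((-((2 : ℕ) * σ ^ (2 - 1) / 2) * σ ^ 2 -
        (rd - rf - σ ^ 2 / 2) * ((2 : ℕ) * σ ^ (2 - 1))) / (σ ^ 2) ^ 2) σ :=
    hn.div (hasDerivAt_pow 2 σ) (pow_ne_zero 2 hσ.ne')
  have hg2 : HasDerivAt (fun v : ℝ => (1 + (rd - rf - v ^ 2 / 2) / v ^ 2) * (v * sT))
      ((-((2 : ℕ) * σ ^ (2 - 1) / 2) * σ ^ 2 -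
          (rd - rf - σ ^ 2 / 2) * ((2 : ℕ) * σ ^ (2 - 1))) / (σ ^ 2) ^ 2 * (σ * sT) +
        (1 + (rd - rf - σ ^ 2 / 2) / σ ^ 2) * sT) σ :=
    (hq.const_add 1).mul hmul
  have hexpr := h1.add hg2
  have hN := ((hasDerivAt_cdf _).comp σ (hexpr.const_mul φ)).const_mul (φ * Real.exp (-rf * T))
  have hD : (0 * (σ * sT) - Real.log (S / K) * sT) / (σ * sT) ^ 2 +
        ((-((2 : ℕ) * σ ^ (2 - 1) / 2) * σ ^ 2 -
            (rd - rf - σ ^ 2 / 2) * ((2 : ℕ) * σ ^ (2 - 1))) / (σ ^ 2) ^ 2 * (σ * sT) +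
          (1 + (rd - rf - σ ^ 2 / 2) / σ ^ 2) * sT) =
      (T * (-2 * rd + 2 * rf + σ ^ 2) - 2 * Real.log (S / K)) / (2 * σ ^ 2 * sT) := by
    rw [show T = sT ^ 2 from hsT2.symm]
    push_cast
    field_simp
    ring
  have hE : Real.exp (Real.log (S / K) * (-rd / σ ^ 2 + rf / σ ^ 2 - 1 / 2)) *
      Real.exp (-(4 * Real.log (S / K) ^ 2 +
          T ^ 2 * (4 * rd ^ 2 + rd * (4 * σ ^ 2 - 8 * rf) + (2 * rf + σ ^ 2) ^ 2)) /
        (8 * σ ^ 2 * T)) =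
      Real.exp (-rf * T) * Real.exp (-(Real.log (S / K) / (σ * sT) +
          (1 + (rd - rf - σ ^ 2 / 2) / σ ^ 2) * (σ * sT)) ^ 2 / 2) := by
    rw [← Real.exp_add, ← Real.exp_add]
    congr 1
    rw [Real.log_div hS.ne' hK.ne', show T = sT ^ 2 from hsT2.symm]
    field_simp
    ring
  have hval : φ * Real.exp (-rf * T) *
      (gpdf (φ * (Real.log (S / K) / (σ * sT) +
          (1 + (rd - rf - σ ^ 2 / 2) / σ ^ 2) * (σ * sT))) *
        (φ * ((0 * (σ * sT) - Real.log (S / K) * sT) / (σ * sT) ^ 2 +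
          ((-((2 : ℕ) * σ ^ (2 - 1) / 2) * σ ^ 2 -
              (rd - rf - σ ^ 2 / 2) * ((2 : ℕ) * σ ^ (2 - 1))) / (σ ^ 2) ^ 2 * (σ * sT) +
            (1 + (rd - rf - σ ^ 2 / 2) / σ ^ 2) * sT)))) =
      (S / K) ^ (-rd / σ ^ 2 + rf / σ ^ 2 - 1 / 2) /
          (2 * Real.sqrt (2 * Real.pi) * σ ^ 2 * sT) *
        (T * (-2 * rd + 2 * rf + σ ^ 2) - 2 * Real.log (S / K)) *
        Real.exp (-(4 * Real.log (S / K) ^ 2 +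
            T ^ 2 * (4 * rd ^ 2 + rd * (4 * σ ^ 2 - 8 * rf) + (2 * rf + σ ^ 2) ^ 2)) /
          (8 * σ ^ 2 * T)) := by
    rw [hD, gpdf_even hφ]
    simp only [gpdf]
    rw [Real.rpow_def_of_pos (div_pos hS hK)]
    rcases hφ with rfl | rfl
    · linear_combination (-((T * (-2 * rd + 2 * rf + σ ^ 2) - 2 * Real.log (S / K)) /
        (2 * Real.sqrt (2 * Real.pi) * σ ^ 2 * sT))) * hE
    · linear_combination (-((T * (-2 * rd + 2 * rf + σ ^ 2) - 2 * Real.log (S / K)) /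
        (2 * Real.sqrt (2 * Real.pi) * σ ^ 2 * sT))) * hE
  simp only [Pi.add_apply] at hN
  rw [hval] at hN
  refine HasDerivAt.congr_of_eventuallyEq hN ?_
  filter_upwards [eventually_gt_nhds hσ] with v hv
  exact delta_eq K T rd rf φ hK hT hφ S v hS hv
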